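/- Let (v_0,v_1,v_2,v_3) and (u_0,u_1,u_2,u_3) be two simple quadrilaterals in ℝ² with equal corresponding edge lengths (‖v_{(i+1) mod 4} − v_i‖ = ‖u_{(i+1) mod 4} − u_i‖ for all i), each reflex at its third vertex, i.e. v_2 lies in the interior of the triangle v_0 v_1 v_3 and u_2 lies in the interior of the triangle u_0 u_1 u_3. If ‖v_2 − v_0‖ < ‖u_2 − u_0‖, then all joints are more open in the second quadrilateral: ∠(v_3,v_0,v_1) < ∠(u_3,u_0,u_1), ∠(v_0,v_1,v_2) < ∠(u_0,u_1,u_2), ∠(v_2,v_3,v_0) < ∠(u_2,u_3,u_0), and ∠(v_1,v_2,v_3) < ∠(u_1,u_2,u_3) (the last being the exterior angle at the reflex joint). -/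

import Mathlib

open scoped EuclideanGeometry RealInnerProductSpace

set_option maxHeartbeats 1000000

noncomputable section

abbrev E2 : Type := EuclideanSpace ℝ (Fin 2)
abbrev E3 : Type := EuclideanSpace ℝ (Fin 3)

/-- Simplicity of a closed polygonal chain with vertices `v 0, …, v (n-1)`
and edges `[v i, v ((i+1) % n)]`. -/
def IsSimpleClosedChain {E : Type*} [NormedAddCommGroup E] [NormedSpace ℝ E]
    (n : ℕ) (v : ℕ → E) : Prop :=
  (∀ i < n, ∀ j < n, i ≠ j → (i + 1) % n ≠ j → (j + 1) % n ≠ i →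
    Disjoint (segment ℝ (v i) (v ((i+1) % n))) (segment ℝ (v j) (v ((j+1) % n)))) ∧
  ∀ i < n, segment ℝ (v i) (v ((i+1) % n)) ∩
      segment ℝ (v ((i+1) % n)) (v ((i+2) % n)) = {v ((i+1) % n)}

/-- A motion of a closed chain: continuous on `[0,1]`, starting at `v`,
preserving all edge lengths and simplicity. -/
def IsClosedChainMotion {E : Type*} [NormedAddCommGroup E] [NormedSpace ℝ E]
    (n : ℕ) (v : ℕ → E) (f : ℝ → ℕ → E) : Prop :=
  (∀ i < n, ContinuousOn (fun t => f t i) (Set.Icc (0:ℝ) 1)) ∧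
  (∀ i < n, f 0 i = v i) ∧
  (∀ t ∈ Set.Icc (0:ℝ) 1, ∀ i < n,
    dist (f t ((i+1) % n)) (f t i) = dist (v ((i+1) % n)) (v i)) ∧
  (∀ t ∈ Set.Icc (0:ℝ) 1, IsSimpleClosedChain n (f t))

/-- A simple quadrilateral `(v 0, v 1, v 2, v 3)` that is reflex at `v 2`:
`v 2` lies in the interior of the triangle `v 0 v 1 v 3`. -/
def SimpleReflexQuad (v : ℕ → E2) : Prop :=
  IsSimpleClosedChain 4 v ∧ v 2 ∈ interior (convexHull ℝ ({v 0, v 1, v 3} : Set E2))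



namespace ReflexAux

open Real Set InnerProductGeometry



lemma angle_lt_of_cos_lt {α β : ℝ} (hα0 : 0 ≤ α) (hαπ : α ≤ π) (hβ0 : 0 ≤ β) (hβπ : β ≤ π)
    (h : Real.cos β < Real.cos α) : α < β := by
  by_contra hc
  push_neg at hc
  rcases eq_or_lt_of_le hc with h' | h'
  · rw [h'] at h; exact lt_irrefl _ h
  · exact absurd (Real.cos_lt_cos_of_nonneg_of_le_pi hβ0 hαπ h') (not_lt.2 h.le)

lemma gfun_lt (a b c e d d' : ℝ) (hb : 0 < b) (hc : 0 < c) (hd : 0 < d) (hdd : d < d')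
    (hab1 : |a - b| < d) (hab2 : d' < a + b) (hce1 : |c - e| < d) (hce2 : d' < c + e)
    (hgd' : π < arccos ((d' ^ 2 + b ^ 2 - a ^ 2) / (2 * b * d'))
        + arccos ((d' ^ 2 + c ^ 2 - e ^ 2) / (2 * c * d'))) :
    arccos ((d' ^ 2 + b ^ 2 - a ^ 2) / (2 * b * d'))
        + arccos ((d' ^ 2 + c ^ 2 - e ^ 2) / (2 * c * d'))
      < arccos ((d ^ 2 + b ^ 2 - a ^ 2) / (2 * b * d))
        + arccos ((d ^ 2 + c ^ 2 - e ^ 2) / (2 * c * d)) := by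
  have ha : 0 < a := by rcases abs_lt.1 hab1 with ⟨h1, h2⟩; linarith
  have he : 0 < e := by rcases abs_lt.1 hce1 with ⟨h1, h2⟩; linarith
  set g : ℝ → ℝ := fun t => arccos ((t ^ 2 + b ^ 2 - a ^ 2) / (2 * b * t))
      + arccos ((t ^ 2 + c ^ 2 - e ^ 2) / (2 * c * t)) with hgdef
  have hbound1 : ∀ t, d ≤ t → t ≤ d' →
      -1 < (t ^ 2 + b ^ 2 - a ^ 2) / (2 * b * t) ∧ (t ^ 2 + b ^ 2 - a ^ 2) / (2 * b * t) < 1 := by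
    intro t h1 h2
    have ht : 0 < t := lt_of_lt_of_le hd h1
    have hden : (0:ℝ) < 2 * b * t := by positivity
    rcases abs_lt.1 hab1 with ⟨k1, k2⟩
    constructor
    · rw [lt_div_iff₀ hden]; nlinarith
    · rw [div_lt_one hden]; nlinarith
  have hbound2 : ∀ t, d ≤ t → t ≤ d' →
      -1 < (t ^ 2 + c ^ 2 - e ^ 2) / (2 * c * t) ∧ (t ^ 2 + c ^ 2 - e ^ 2) / (2 * c * t) < 1 := by
    intro t h1 h2
    have ht : 0 < t := lt_of_lt_of_le hd h1
    have hden : (0:ℝ) < 2 * c * t := by positivity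
    rcases abs_lt.1 hce1 with ⟨k1, k2⟩
    constructor
    · rw [lt_div_iff₀ hden]; nlinarith
    · rw [div_lt_one hden]; nlinarith
  have hcont : ContinuousOn g (Icc d d') := by
    apply ContinuousOn.add
    · apply Real.continuous_arccos.comp_continuousOn
      apply ContinuousOn.div (by fun_prop) (by fun_prop)
      intro t ht
      have : 0 < t := lt_of_lt_of_le hd ht.1
      positivity
    · apply Real.continuous_arccos.comp_continuousOn
      apply ContinuousOn.div (by fun_prop) (by fun_prop)
      intro t ht
      have : 0 < t := lt_of_lt_of_le hd ht.1
      positivity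
  have hderiv : ∀ t, d ≤ t → t ≤ d' → π ≤ g t → deriv g t < 0 := by
    intro t h1 h2 hπ
    have ht : 0 < t := lt_of_lt_of_le hd h1
    obtain ⟨hP1, hP2⟩ := hbound1 t h1 h2
    obtain ⟨hQ1, hQ2⟩ := hbound2 t h1 h2
    set P : ℝ := (t ^ 2 + b ^ 2 - a ^ 2) / (2 * b * t) with hPdef
    set Q : ℝ := (t ^ 2 + c ^ 2 - e ^ 2) / (2 * c * t) with hQdef
    set s1 : ℝ := Real.sqrt (1 - P ^ 2) with hs1def
    set s2 : ℝ := Real.sqrt (1 - Q ^ 2) with hs2def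
    have hs1pos : 0 < s1 := Real.sqrt_pos.2 (by nlinarith)
    have hs2pos : 0 < s2 := Real.sqrt_pos.2 (by nlinarith)
    have hs1sq : s1 ^ 2 = 1 - P ^ 2 := Real.sq_sqrt (by nlinarith)
    have hs2sq : s2 ^ 2 = 1 - Q ^ 2 := Real.sq_sqrt (by nlinarith)
    -- P + Q ≤ 0 from π ≤ g t
    have hPQ : P + Q ≤ 0 := by
      by_contra hcon
      push_neg at hcon
      have h3 : arccos P < arccos (-Q) :=
        Real.strictAntiOn_arccos ⟨by linarith, by linarith⟩ ⟨hP1.le, hP2.le⟩ (by linarith)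
      rw [Real.arccos_neg] at h3
      have hgt : g t = arccos P + arccos Q := rfl
      have := Real.arccos_nonneg Q
      linarith [hπ, h3]
    -- derivative of the two quotients
    have hp1 : HasDerivAt (fun t : ℝ => (t ^ 2 + b ^ 2 - a ^ 2) / (2 * b * t))
        ((t - b * P) / (b * t)) t := by
      have h1' : HasDerivAt (fun x : ℝ => x ^ 2 + b ^ 2 - a ^ 2) (2 * t) t := by
        simpa using ((hasDerivAt_pow 2 t).add_const (b ^ 2)).sub_const (a ^ 2)
      have h2' : HasDerivAt (fun x : ℝ => 2 * b * x) (2 * b) t := by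
        simpa using (hasDerivAt_id t).const_mul (2 * b)
      have h3' := h1'.div h2' (by positivity)
      refine h3'.congr_deriv ?_
      rw [hPdef]
      field_simp
    have hp2 : HasDerivAt (fun t : ℝ => (t ^ 2 + c ^ 2 - e ^ 2) / (2 * c * t))
        ((t - c * Q) / (c * t)) t := by
      have h1' : HasDerivAt (fun x : ℝ => x ^ 2 + c ^ 2 - e ^ 2) (2 * t) t := by
        simpa using ((hasDerivAt_pow 2 t).add_const (c ^ 2)).sub_const (e ^ 2)
      have h2' : HasDerivAt (fun x : ℝ => 2 * c * x) (2 * c) t := by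
        simpa using (hasDerivAt_id t).const_mul (2 * c)
      have h3' := h1'.div h2' (by positivity)
      refine h3'.congr_deriv ?_
      rw [hQdef]
      field_simp
    have ha1 : HasDerivAt (fun t : ℝ => arccos ((t ^ 2 + b ^ 2 - a ^ 2) / (2 * b * t)))
        (-(1 / s1) * ((t - b * P) / (b * t))) t := by
      have := (Real.hasDerivAt_arccos (x := P) (by linarith) (by linarith)).comp t hp1
      exact this
    have ha2 : HasDerivAt (fun t : ℝ => arccos ((t ^ 2 + c ^ 2 - e ^ 2) / (2 * c * t)))
        (-(1 / s2) * ((t - c * Q) / (c * t))) t := by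
      have := (Real.hasDerivAt_arccos (x := Q) (by linarith) (by linarith)).comp t hp2
      exact this
    have hsum : HasDerivAt g
        (-(1 / s1) * ((t - b * P) / (b * t)) + -(1 / s2) * ((t - c * Q) / (c * t))) t :=
      ha1.add ha2
    rw [hsum.deriv]
    -- core inequality
    have hRHS : P * s2 + Q * s1 ≤ 0 := by
      rcases le_or_gt P 0 with hP0 | hP0
      · rcases le_or_gt Q 0 with hQ0 | hQ0
        · nlinarith
        · -- Q > 0, P ≤ -Q < 0
          have hPle : P ≤ -Q := by linarith
          have h4 : (Q * s1) ^ 2 ≤ ((-P) * s2) ^ 2 := by nlinarith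
          have h5 : Q * s1 ≤ (-P) * s2 := by nlinarith [mul_pos hQ0 hs1pos, mul_pos (by linarith : (0:ℝ) < -P) hs2pos]
          linarith
      · -- P > 0, Q ≤ -P < 0
        have hQle : Q ≤ -P := by linarith
        have h4 : (P * s2) ^ 2 ≤ ((-Q) * s1) ^ 2 := by nlinarith
        have h5 : P * s2 ≤ (-Q) * s1 := by nlinarith [mul_pos hP0 hs2pos, mul_pos (by linarith : (0:ℝ) < -Q) hs1pos]
        linarith
    have hkey : 0 < c * s2 * (t - b * P) + b * s1 * (t - c * Q) := by
      have h6 : b * c * (P * s2 + Q * s1) ≤ 0 :=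
        mul_nonpos_of_nonneg_of_nonpos (by positivity) hRHS
      nlinarith [mul_pos (mul_pos hc hs2pos) ht, mul_pos (mul_pos hb hs1pos) ht]
    have heq : (1 / s1) * ((t - b * P) / (b * t)) + (1 / s2) * ((t - c * Q) / (c * t))
        = (c * s2 * (t - b * P) + b * s1 * (t - c * Q)) / (s1 * s2 * (b * c * t)) := by
      field_simp
    have hpos : 0 < (1 / s1) * ((t - b * P) / (b * t)) + (1 / s2) * ((t - c * Q) / (c * t)) := by
      rw [heq]
      exact div_pos hkey (by positivity)
    linarith
  -- every point of the interval has g > π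
  have hS : ∀ t ∈ Icc d d', π < g t := by
    by_contra hcon
    push_neg at hcon
    obtain ⟨t0, ht0, hgt0⟩ := hcon
    set S : Set ℝ := Icc d d' ∩ g ⁻¹' (Iic π) with hSdef
    have hSne : S.Nonempty := ⟨t0, ht0, hgt0⟩
    have hSclosed : IsClosed S := hcont.preimage_isClosed_of_isClosed isClosed_Icc isClosed_Iic
    have hbdd : BddAbove S := (bddAbove_Icc (a := d) (b := d')).mono (Set.inter_subset_left)
    have ht2S : sSup S ∈ S := hSclosed.csSup_mem hSne hbdd
    obtain ⟨⟨ht2d, ht2d'⟩, hgt2⟩ := ht2S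
    have hgt2' : g (sSup S) ≤ π := hgt2
    have ht2lt : sSup S < d' := by
      rcases lt_or_eq_of_le ht2d' with h | h
      · exact h
      · rw [h] at hgt2'
        exact absurd hgt2' (not_le.2 (show π < g d' from hgd'))
    have hanti : StrictAntiOn g (Icc (sSup S) d') := by
      apply strictAntiOn_of_deriv_neg (convex_Icc _ _) (hcont.mono (Icc_subset_Icc ht2d le_rfl))
      intro x hx
      rw [interior_Icc] at hx
      have hxd : d ≤ x := le_trans ht2d hx.1.le
      apply hderiv x hxd hx.2.le
      by_contra hgx
      push_neg at hgx
      have hxS : x ∈ S := ⟨⟨hxd, hx.2.le⟩, hgx.le⟩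
      exact absurd (le_csSup hbdd hxS) (not_le.2 hx.1)
    have := hanti ⟨le_rfl, ht2d'⟩ ⟨ht2lt.le, le_rfl⟩ ht2lt
    have hgd'2 : π < g d' := hgd'
    linarith
  have hanti : StrictAntiOn g (Icc d d') := by
    apply strictAntiOn_of_deriv_neg (convex_Icc _ _) hcont
    intro x hx
    rw [interior_Icc] at hx
    exact hderiv x hx.1.le hx.2.le (hS x ⟨hx.1.le, hx.2.le⟩).le
  exact hanti ⟨le_rfl, hdd.le⟩ ⟨hdd.le, le_rfl⟩ hdd





instance : Fact (Module.finrank ℝ E2 = 2) := ⟨finrank_euclideanSpace_fin⟩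

lemma coe_angle_sum {A B C : ℝ} (hA0 : 0 < A) (hAπ : A < π) (hB0 : 0 < B) (hBπ : B < π)
    (hC0 : 0 ≤ C) (hCπ : C ≤ π) (h : ((A : Real.Angle) + (B : Real.Angle)) = (C : Real.Angle)) :
    A + B = C := by
  rw [← Real.Angle.coe_add] at h
  obtain ⟨k, hk⟩ := Real.Angle.angle_eq_iff_two_pi_dvd_sub.1 h
  have hπ := Real.pi_pos
  have h1 : 2 * π * (k : ℝ) < 2 * π * 1 := by rw [mul_one]; linarith
  have h2 : 2 * π * (-1 : ℝ) < 2 * π * (k : ℝ) := by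
    have : (2:ℝ) * π * (-1) = -(2*π) := by ring
    rw [this]; linarith
  have hk1 : (k : ℝ) < 1 := lt_of_mul_lt_mul_left h1 (by positivity)
  have hk2 : (-1 : ℝ) < (k : ℝ) := lt_of_mul_lt_mul_left h2 (by positivity)
  have hk1' : k < 1 := by exact_mod_cast hk1
  have hk2' : (-1 : ℤ) < k := by exact_mod_cast hk2
  have : k = 0 := by omega
  rw [this] at hk
  push_cast at hk
  linarith

lemma pos_lt_pi_of_sign_ne_zero (o : Orientation ℝ E2 (Fin 2)) {x y : E2}
    (hx : x ≠ 0) (hy : y ≠ 0) (h : (o.oangle x y).sign ≠ 0) :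
    0 < angle x y ∧ angle x y < π := by
  have h0 : o.oangle x y ≠ 0 ∧ o.oangle x y ≠ π := by
    constructor <;> intro hc <;> apply h <;> rw [hc] <;> simp [Real.Angle.sign_eq_zero_iff]
  have hne0 : angle x y ≠ 0 := fun hc => h0.1 ((o.oangle_eq_zero_iff_angle_eq_zero hx hy).2 hc)
  have hneπ : angle x y ≠ π := fun hc => h0.2 (o.oangle_eq_pi_iff_angle_eq_pi.2 hc)
  exact ⟨lt_of_le_of_ne (angle_nonneg x y) (Ne.symm hne0),
    lt_of_le_of_ne (angle_le_pi x y) hneπ⟩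

lemma angle_split (o : Orientation ℝ E2 (Fin 2)) {y z : E2} {s r : ℝ} (hs : 0 < s) (hr : 0 < r)
    (hy : y ≠ 0) (hz : z ≠ 0) (hsgn : (o.oangle y z).sign ≠ 0) :
    angle y (s • y + r • z) + angle (s • y + r • z) z = angle y z := by
  set w : E2 := s • y + r • z with hw
  have h1 : (o.oangle y w).sign = (o.oangle y z).sign := by
    rw [hw, o.oangle_sign_smul_add_smul_right y z s r, _root_.sign_pos hr, one_mul]
  have h2 : (o.oangle w z).sign = (o.oangle y z).sign := by
    rw [hw, o.oangle_sign_smul_add_smul_left y z s r, _root_.sign_pos hs, one_mul]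
  have hwne : w ≠ 0 := by
    intro hc
    rw [hc] at h1
    simp only [Orientation.oangle_zero_right, Real.Angle.sign_zero] at h1
    exact hsgn h1.symm
  have hadd := o.oangle_add hy hwne hz
  obtain ⟨hA0, hAπ⟩ := pos_lt_pi_of_sign_ne_zero o hy hwne (by rw [h1]; exact hsgn)
  obtain ⟨hB0, hBπ⟩ := pos_lt_pi_of_sign_ne_zero o hwne hz (by rw [h2]; exact hsgn)
  have htri : (o.oangle y z).sign = 0 ∨ (o.oangle y z).sign = 1 ∨ (o.oangle y z).sign = -1 := by
    rcases (o.oangle y z).sign with _ | _ | _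
    exacts [Or.inl (by decide), Or.inr (Or.inr (by decide)), Or.inr (Or.inl (by decide))]
  rcases htri with hσ | hσ | hσ
  · exact absurd hσ hsgn
  · -- sign = 1
    have e1 : o.oangle y w = (angle y w : Real.Angle) :=
      o.oangle_eq_angle_of_sign_eq_one (by rw [h1]; exact hσ)
    have e2 : o.oangle w z = (angle w z : Real.Angle) :=
      o.oangle_eq_angle_of_sign_eq_one (by rw [h2]; exact hσ)
    have e3 : o.oangle y z = (angle y z : Real.Angle) :=
      o.oangle_eq_angle_of_sign_eq_one hσ
    rw [e1, e2, e3] at hadd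
    exact coe_angle_sum hA0 hAπ hB0 hBπ (angle_nonneg y z) (angle_le_pi y z) hadd
  · -- sign = -1
    have e1 : o.oangle y w = -(angle y w : Real.Angle) :=
      o.oangle_eq_neg_angle_of_sign_eq_neg_one (by rw [h1]; exact hσ)
    have e2 : o.oangle w z = -(angle w z : Real.Angle) :=
      o.oangle_eq_neg_angle_of_sign_eq_neg_one (by rw [h2]; exact hσ)
    have e3 : o.oangle y z = -(angle y z : Real.Angle) :=
      o.oangle_eq_neg_angle_of_sign_eq_neg_one hσ
    rw [e1, e2, e3, ← neg_add, neg_inj] at hadd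
    exact coe_angle_sum hA0 hAπ hB0 hBπ (angle_nonneg y z) (angle_le_pi y z) hadd

lemma angle_around (o : Orientation ℝ E2 (Fin 2)) {x y z : E2} {w0 w1 w3 : ℝ}
    (h0 : 0 < w0) (h1 : 0 < w1) (h3 : 0 < w3)
    (hrel : w0 • x + w1 • y + w3 • z = 0)
    (hy : y ≠ 0) (hz : z ≠ 0) (hsgn : (o.oangle y z).sign ≠ 0) :
    angle x y + angle x z = 2 * π - angle y z := by
  have hw0 : w0 ≠ 0 := h0.ne'
  have hrel' : w0 • x + (w1 • y + w3 • z) = 0 := by rw [← add_assoc]; exact hrel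
  have hx : x = -((w1 / w0) • y + (w3 / w0) • z) := by
    have h4 : w0 • x = -(w1 • y + w3 • z) := eq_neg_of_add_eq_zero_left hrel'
    have h5 : x = w0⁻¹ • (w0 • x) := (inv_smul_smul₀ hw0 x).symm
    rw [h5, h4, smul_neg, smul_add, smul_smul, smul_smul, neg_inj,
      div_eq_inv_mul, div_eq_inv_mul]
  have hs : 0 < w1 / w0 := div_pos h1 h0
  have hr : 0 < w3 / w0 := div_pos h3 h0
  have hsplit := angle_split o hs hr hy hz hsgn
  rw [hx, angle_neg_left, angle_neg_left, angle_comm _ y]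
  linarith



lemma collinear_of_det_eq_zero (q0 q1 q2 : E2)
    (h : (q1 0 - q0 0) * (q2 1 - q0 1) - (q1 1 - q0 1) * (q2 0 - q0 0) = 0) :
    Collinear ℝ ({q0, q1, q2} : Set E2) := by
  rw [collinear_iff_of_mem (Set.mem_insert q0 _)]
  by_cases h1 : q1 - q0 = 0
  · refine ⟨q2 - q0, fun q hq => ?_⟩
    have hq10 : q1 = q0 := by rwa [sub_eq_zero] at h1
    simp only [Set.mem_insert_iff, Set.mem_singleton_iff] at hq
    rcases hq with rfl | rfl | rfl
    · exact ⟨0, by simp [vadd_eq_add]⟩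
    · exact ⟨0, by simp [vadd_eq_add, hq10]⟩
    · exact ⟨1, by simp [vadd_eq_add]⟩
  · have hgen : ∀ q : E2, (q1 0 - q0 0) * (q 1 - q0 1) - (q1 1 - q0 1) * (q 0 - q0 0) = 0 →
        ∃ r : ℝ, q = r • (q1 - q0) +ᵥ q0 := by
      intro q hdet
      by_cases h2 : q1 0 - q0 0 = 0
      · have h3 : q1 1 - q0 1 ≠ 0 := by
          intro h3
          apply h1
          ext i
          fin_cases i
          · simpa using h2
          · simpa using h3
        have h4 : q 0 - q0 0 = 0 := by
          rw [h2, zero_mul, zero_sub, neg_eq_zero] at hdet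
          exact (mul_eq_zero.1 hdet).resolve_left h3
        refine ⟨(q 1 - q0 1) / (q1 1 - q0 1), ?_⟩
        have key0 : q 0 = (q 1 - q0 1) / (q1 1 - q0 1) * (q1 0 - q0 0) + q0 0 := by
          rw [h2, mul_zero, zero_add]; linarith
        have key1 : q 1 = (q 1 - q0 1) / (q1 1 - q0 1) * (q1 1 - q0 1) + q0 1 := by
          rw [div_mul_cancel₀ _ h3]; ring
        ext i
        fin_cases i
        · simpa [vadd_eq_add] using key0
        · simpa [vadd_eq_add] using key1
      · refine ⟨(q 0 - q0 0) / (q1 0 - q0 0), ?_⟩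
        have key0 : q 0 = (q 0 - q0 0) / (q1 0 - q0 0) * (q1 0 - q0 0) + q0 0 := by
          rw [div_mul_cancel₀ _ h2]; ring
        have key1 : q 1 = (q 0 - q0 0) / (q1 0 - q0 0) * (q1 1 - q0 1) + q0 1 := by
          field_simp
          linear_combination hdet
        ext i
        fin_cases i
        · simpa [vadd_eq_add] using key0
        · simpa [vadd_eq_add] using key1
    refine ⟨q1 - q0, fun q hq => ?_⟩
    simp only [Set.mem_insert_iff, Set.mem_singleton_iff] at hq
    rcases hq with rfl | rfl | rfl
    · exact ⟨0, by simp [vadd_eq_add]⟩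
    · exact ⟨1, by simp [vadd_eq_add]⟩
    · exact hgen _ h

lemma det_eq_zero_of_collinear (q0 q1 q2 : E2) (h : Collinear ℝ ({q0, q1, q2} : Set E2)) :
    (q1 0 - q0 0) * (q2 1 - q0 1) - (q1 1 - q0 1) * (q2 0 - q0 0) = 0 := by
  rw [collinear_iff_of_mem (Set.mem_insert q0 _)] at h
  obtain ⟨v, hv⟩ := h
  obtain ⟨r1, hq1⟩ := hv q1 (by simp)
  obtain ⟨r2, hq2⟩ := hv q2 (by simp)
  have e1 : ∀ i, q1 i - q0 i = r1 * v i := by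
    intro i; rw [hq1]; simp [vadd_eq_add]
  have e2 : ∀ i, q2 i - q0 i = r2 * v i := by
    intro i; rw [hq2]; simp [vadd_eq_add]
  rw [e1 0, e1 1, e2 0, e2 1]; ring

lemma strict_tri (q0 q1 q2 : E2) (h : ¬ Collinear ℝ ({q0, q1, q2} : Set E2)) :
    dist q0 q2 < dist q0 q1 + dist q1 q2 := by
  rcases lt_or_eq_of_le (dist_triangle q0 q1 q2) with h' | h'
  · exact h'
  · exact absurd (dist_add_dist_eq_iff.1 h'.symm).collinear h

lemma reflex_facts (p0 p1 p2 p3 : E2)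
    (hint : p2 ∈ interior (convexHull ℝ ({p0, p1, p3} : Set E2))) :
    (0 < dist p0 p1 ∧ 0 < dist p1 p2 ∧ 0 < dist p2 p3 ∧ 0 < dist p3 p0 ∧ 0 < dist p0 p2) ∧
    (|dist p0 p1 - dist p1 p2| < dist p0 p2 ∧ dist p0 p2 < dist p0 p1 + dist p1 p2) ∧
    (|dist p2 p3 - dist p3 p0| < dist p0 p2 ∧ dist p0 p2 < dist p2 p3 + dist p3 p0) ∧
    (∠ p1 p2 p3 < π) ∧
    (∠ p0 p2 p1 = Real.arccos ((dist p0 p2 ^ 2 + dist p1 p2 ^ 2 - dist p0 p1 ^ 2) /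
        (2 * dist p1 p2 * dist p0 p2))) ∧
    (∠ p0 p2 p3 = Real.arccos ((dist p0 p2 ^ 2 + dist p2 p3 ^ 2 - dist p3 p0 ^ 2) /
        (2 * dist p2 p3 * dist p0 p2))) ∧
    (∠ p0 p2 p1 + ∠ p0 p2 p3 = 2 * π - ∠ p1 p2 p3) := by
  classical
  -- affine span is everything
  have htop : affineSpan ℝ ({p0, p1, p3} : Set E2) = ⊤ :=
    interior_convexHull_nonempty_iff_affineSpan_eq_top.1 ⟨p2, hint⟩
  have hncol : ¬ Collinear ℝ ({p0, p1, p3} : Set E2) := by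
    intro hcol
    have h1 : vectorSpan ℝ ({p0, p1, p3} : Set E2) = ⊤ := by
      rw [← direction_affineSpan, htop, AffineSubspace.direction_top]
    rw [collinear_iff_rank_le_one, h1] at hcol
    have h2 : Module.rank ℝ E2 ≤ 1 := by rwa [rank_top] at hcol
    have h4 : Module.finrank ℝ E2 ≤ 1 := Module.finrank_le_of_rank_le h2
    rw [finrank_euclideanSpace_fin] at h4
    omega
  have hrange : Set.range ![p0, p1, p3] = ({p0, p1, p3} : Set E2) := by
    ext x
    constructor
    · rintro ⟨i, rfl⟩
      fin_cases i <;> simp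
    · rintro (rfl | rfl | rfl)
      exacts [⟨0, rfl⟩, ⟨1, rfl⟩, ⟨2, rfl⟩]
  have haff : AffineIndependent ℝ ![p0, p1, p3] :=
    affineIndependent_iff_not_collinear.2 (by rw [hrange]; exact hncol)
  set B : AffineBasis (Fin 3) ℝ E2 := ⟨![p0, p1, p3], haff, by rw [hrange]; exact htop⟩ with hB
  have hBcoe : ⇑B = ![p0, p1, p3] := rfl
  have hcoordpos : ∀ i, 0 < B.coord i p2 := by
    have h5 := B.interior_convexHull
    rw [hBcoe, hrange] at h5
    rw [h5] at hint
    exact hint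
  have hw0 : 0 < B.coord 0 p2 := hcoordpos 0
  have hw1 : 0 < B.coord 1 p2 := hcoordpos 1
  have hw2 : 0 < B.coord 2 p2 := hcoordpos 2
  set w0 : ℝ := B.coord 0 p2
  set w1 : ℝ := B.coord 1 p2
  set w2 : ℝ := B.coord 2 p2
  have hsum : w0 + w1 + w2 = 1 := by
    have h6 := B.sum_coord_apply_eq_one p2
    rwa [Fin.sum_univ_three] at h6
  have hcomb : w0 • p0 + w1 • p1 + w2 • p3 = p2 := by
    have h7 := B.linear_combination_coord_eq_self p2
    rw [Fin.sum_univ_three] at h7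
    rw [hBcoe] at h7
    simpa using h7
  have hrel : w0 • (p0 - p2) + w1 • (p1 - p2) + w2 • (p3 - p2) = 0 := by
    have hid : w0 • (p0 - p2) + w1 • (p1 - p2) + w2 • (p3 - p2)
        = (w0 • p0 + w1 • p1 + w2 • p3) - (w0 + w1 + w2) • p2 := by
      module
    rw [hid, hcomb, hsum, one_smul, sub_self]
  have hrelc : ∀ i : Fin 2, w0 * (p0 i - p2 i) + w1 * (p1 i - p2 i) + w2 * (p3 i - p2 i) = 0 := by
    intro i
    have h8 := congrArg (fun z : E2 => z i) hrel
    simpa using h8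
  have h00 := hrelc 0
  have h11 := hrelc 1
  -- determinants
  have hDBne : (p1 0 - p0 0) * (p3 1 - p0 1) - (p1 1 - p0 1) * (p3 0 - p0 0) ≠ 0 :=
    fun hc => hncol (collinear_of_det_eq_zero p0 p1 p3 hc)
  -- three determinants based at p2
  have hR1 : w0 * ((p0 0 - p2 0) * (p1 1 - p2 1) - (p0 1 - p2 1) * (p1 0 - p2 0))
      = w2 * ((p1 0 - p2 0) * (p3 1 - p2 1) - (p1 1 - p2 1) * (p3 0 - p2 0)) := by
    linear_combination (p1 1 - p2 1) * h00 - (p1 0 - p2 0) * h11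
  have hR2 : w2 * ((p3 0 - p2 0) * (p0 1 - p2 1) - (p3 1 - p2 1) * (p0 0 - p2 0))
      = w1 * ((p0 0 - p2 0) * (p1 1 - p2 1) - (p0 1 - p2 1) * (p1 0 - p2 0)) := by
    linear_combination (p0 1 - p2 1) * h00 - (p0 0 - p2 0) * h11
  have hR3 : w0 * ((p3 0 - p2 0) * (p0 1 - p2 1) - (p3 1 - p2 1) * (p0 0 - p2 0))
      = w1 * ((p1 0 - p2 0) * (p3 1 - p2 1) - (p1 1 - p2 1) * (p3 0 - p2 0)) := by
    linear_combination (p3 0 - p2 0) * h11 - (p3 1 - p2 1) * h00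
  have hDxyne : (p0 0 - p2 0) * (p1 1 - p2 1) - (p0 1 - p2 1) * (p1 0 - p2 0) ≠ 0 := by
    intro hc
    apply hDBne
    have e1 : (p1 0 - p2 0) * (p3 1 - p2 1) - (p1 1 - p2 1) * (p3 0 - p2 0) = 0 := by
      have := hR1
      rw [hc, mul_zero] at this
      exact (mul_eq_zero.1 this.symm).resolve_left hw2.ne'
    have e2 : (p3 0 - p2 0) * (p0 1 - p2 1) - (p3 1 - p2 1) * (p0 0 - p2 0) = 0 := by
      have := hR3
      rw [e1, mul_zero] at this
      exact (mul_eq_zero.1 this).resolve_left hw0.ne'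
    linear_combination hc + e1 + e2
  have hDyzne : (p1 0 - p2 0) * (p3 1 - p2 1) - (p1 1 - p2 1) * (p3 0 - p2 0) ≠ 0 := by
    intro hc
    apply hDxyne
    have := hR1
    rw [hc, mul_zero] at this
    exact (mul_eq_zero.1 this).resolve_left hw0.ne'
  have hDzxne : (p3 0 - p2 0) * (p0 1 - p2 1) - (p3 1 - p2 1) * (p0 0 - p2 0) ≠ 0 := by
    intro hc
    apply hDxyne
    have := hR2
    rw [hc, mul_zero] at this
    exact ((mul_eq_zero.1 this.symm).resolve_left hw1.ne')
  -- distinctness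
  have hne01 : p0 ≠ p1 := by
    intro hc; apply hDxyne; rw [hc]; ring
  have hne12 : p1 ≠ p2 := by
    intro hc; apply hDxyne; rw [hc]; ring
  have hne23 : p2 ≠ p3 := by
    intro hc; apply hDyzne; rw [← hc]; ring
  have hne30 : p3 ≠ p0 := by
    intro hc; apply hDzxne; rw [hc]; ring
  have hne02 : p0 ≠ p2 := by
    intro hc; apply hDxyne; rw [hc]; ring
  have hd01 : 0 < dist p0 p1 := dist_pos.2 hne01
  have hd12 : 0 < dist p1 p2 := dist_pos.2 hne12
  have hd23 : 0 < dist p2 p3 := dist_pos.2 hne23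
  have hd30 : 0 < dist p3 p0 := dist_pos.2 hne30
  have hd02 : 0 < dist p0 p2 := dist_pos.2 hne02
  -- strict triangle inequalities
  have t1 : dist p0 p2 < dist p0 p1 + dist p1 p2 :=
    strict_tri p0 p1 p2 (fun hc => hDxyne (by linear_combination det_eq_zero_of_collinear p0 p1 p2 hc))
  have t2 : dist p0 p1 < dist p0 p2 + dist p2 p1 :=
    strict_tri p0 p2 p1 (fun hc => hDxyne (by linear_combination (-1 : ℝ) * det_eq_zero_of_collinear p0 p2 p1 hc))
  have t3 : dist p1 p2 < dist p1 p0 + dist p0 p2 :=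
    strict_tri p1 p0 p2 (fun hc => hDxyne (by linear_combination (-1 : ℝ) * det_eq_zero_of_collinear p1 p0 p2 hc))
  have s1 : dist p0 p2 < dist p0 p3 + dist p3 p2 :=
    strict_tri p0 p3 p2 (fun hc => hDzxne (by linear_combination (-1 : ℝ) * det_eq_zero_of_collinear p0 p3 p2 hc))
  have s2 : dist p2 p3 < dist p2 p0 + dist p0 p3 :=
    strict_tri p2 p0 p3 (fun hc => hDzxne (by linear_combination (-1 : ℝ) * det_eq_zero_of_collinear p2 p0 p3 hc))
  have s3 : dist p3 p0 < dist p3 p2 + dist p2 p0 :=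
    strict_tri p3 p2 p0 (fun hc => hDzxne (by linear_combination (-1 : ℝ) * det_eq_zero_of_collinear p3 p2 p0 hc))
  rw [dist_comm p2 p1] at t2
  rw [dist_comm p1 p0] at t3
  rw [dist_comm p0 p3, dist_comm p3 p2] at s1
  rw [dist_comm p2 p0, dist_comm p0 p3] at s2
  rw [dist_comm p3 p2, dist_comm p2 p0] at s3
  have habs1 : |dist p0 p1 - dist p1 p2| < dist p0 p2 := abs_sub_lt_iff.2 ⟨by linarith, by linarith⟩
  have habs2 : |dist p2 p3 - dist p3 p0| < dist p0 p2 := abs_sub_lt_iff.2 ⟨by linarith, by linarith⟩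
  -- exterior angle < π
  have hangpi : ∠ p1 p2 p3 < π := by
    rcases lt_or_eq_of_le (EuclideanGeometry.angle_le_pi p1 p2 p3) with h | h
    · exact h
    · exfalso
      have hsb := EuclideanGeometry.angle_eq_pi_iff_sbtw.1 h
      have hcol := hsb.wbtw.collinear
      exact hDyzne (by linear_combination (-1 : ℝ) * det_eq_zero_of_collinear p1 p2 p3 hcol)
  -- law of cosines expressions
  have harc1 : ∠ p0 p2 p1 = Real.arccos ((dist p0 p2 ^ 2 + dist p1 p2 ^ 2 - dist p0 p1 ^ 2) /
      (2 * dist p1 p2 * dist p0 p2)) := by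
    have hlaw := EuclideanGeometry.law_cos p0 p2 p1
    have hcos : Real.cos (∠ p0 p2 p1)
        = (dist p0 p2 ^ 2 + dist p1 p2 ^ 2 - dist p0 p1 ^ 2) / (2 * dist p1 p2 * dist p0 p2) := by
      rw [eq_div_iff (by positivity)]
      linear_combination hlaw
    rw [← hcos, Real.arccos_cos (EuclideanGeometry.angle_nonneg _ _ _)
      (EuclideanGeometry.angle_le_pi _ _ _)]
  have harc2 : ∠ p0 p2 p3 = Real.arccos ((dist p0 p2 ^ 2 + dist p2 p3 ^ 2 - dist p3 p0 ^ 2) /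
      (2 * dist p2 p3 * dist p0 p2)) := by
    have hlaw := EuclideanGeometry.law_cos p0 p2 p3
    have hcos : Real.cos (∠ p0 p2 p3)
        = (dist p0 p2 ^ 2 + dist p2 p3 ^ 2 - dist p3 p0 ^ 2) / (2 * dist p2 p3 * dist p0 p2) := by
      rw [dist_comm p3 p2, dist_comm p0 p3] at hlaw
      rw [eq_div_iff (by positivity)]
      linear_combination hlaw
    rw [← hcos, Real.arccos_cos (EuclideanGeometry.angle_nonneg _ _ _)
      (EuclideanGeometry.angle_le_pi _ _ _)]
  -- angle sum around p2
  have hyne : p1 - p2 ≠ 0 := sub_ne_zero_of_ne hne12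
  have hzne : p3 - p2 ≠ 0 := sub_ne_zero_of_ne (Ne.symm hne23)
  set o : Orientation ℝ E2 (Fin 2) := (EuclideanSpace.basisFun (Fin 2) ℝ).toBasis.orientation with ho
  have hsgn : (o.oangle (p1 - p2) (p3 - p2)).sign ≠ 0 := by
    intro hsg
    rw [Real.Angle.sign_eq_zero_iff] at hsg
    have hang : InnerProductGeometry.angle (p1 - p2) (p3 - p2) = 0 ∨
        InnerProductGeometry.angle (p1 - p2) (p3 - p2) = π := by
      rcases hsg with h | h
      · exact Or.inl ((o.oangle_eq_zero_iff_angle_eq_zero hyne hzne).1 h)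
      · exact Or.inr (o.oangle_eq_pi_iff_angle_eq_pi.1 h)
    have hkill : ∃ r : ℝ, p3 - p2 = r • (p1 - p2) := by
      rcases hang with h | h
      · obtain ⟨-, r, -, hr⟩ := InnerProductGeometry.angle_eq_zero_iff.1 h
        exact ⟨r, hr⟩
      · obtain ⟨-, r, -, hr⟩ := InnerProductGeometry.angle_eq_pi_iff.1 h
        exact ⟨r, hr⟩
    obtain ⟨r, hr⟩ := hkill
    apply hDyzne
    have e0 : p3 0 - p2 0 = r * (p1 0 - p2 0) := by
      have := congrArg (fun z : E2 => z 0) hr; simpa using this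
    have e1 : p3 1 - p2 1 = r * (p1 1 - p2 1) := by
      have := congrArg (fun z : E2 => z 1) hr; simpa using this
    rw [e0, e1]; ring
  have hsum3 := angle_around o hw0 hw1 hw2 hrel hyne hzne hsgn
  have hconv : ∀ q1 q2 q3 : E2, ∠ q1 q2 q3 = InnerProductGeometry.angle (q1 - q2) (q3 - q2) := by
    intro q1 q2 q3
    rfl
  rw [← hconv, ← hconv, ← hconv] at hsum3
  exact ⟨⟨hd01, hd12, hd23, hd30, hd02⟩, ⟨habs1, t1⟩, ⟨habs2, by linarith⟩, hangpi,
    harc1, harc2, hsum3⟩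

lemma cos_lt_of_law {A B dv du cv cu : ℝ} (hA : 0 < A) (hB : 0 < B)
    (h1 : dv * dv = A * A + B * B - 2 * A * B * cv)
    (h2 : du * du = A * A + B * B - 2 * A * B * cu)
    (hlt : dv * dv < du * du) : cu < cv := by
  nlinarith [mul_pos hA hB]

lemma sq_lt_of_cos_lt {A B mv mu cv cu : ℝ} (hA : 0 < A) (hB : 0 < B)
    (h1 : mv * mv = A * A + B * B - 2 * A * B * cv)
    (h2 : mu * mu = A * A + B * B - 2 * A * B * cu)
    (hc : cu < cv) : mv * mv < mu * mu := by
  nlinarith [mul_pos hA hB]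

end ReflexAux

/-- For two simple quadrilaterals with equal corresponding
edge lengths, each reflex at its third vertex, if the interior diagonal of the
first is shorter then every joint is more open in the second: the undirected
angles at `v 0`, `v 1`, `v 3` (interior) and at `v 2` (exterior) are all
strictly smaller in the first quadrilateral. -/
theorem reflex_quad_joints_open (v u : ℕ → E2)
    (hv : SimpleReflexQuad v) (hu : SimpleReflexQuad u)
    (hlen : ∀ i < 4, dist (v ((i+1) % 4)) (v i) = dist (u ((i+1) % 4)) (u i))
    (hdiag : dist (v 2) (v 0) < dist (u 2) (u 0)) :
    ∠ (v 3) (v 0) (v 1) < ∠ (u 3) (u 0) (u 1) ∧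
    ∠ (v 0) (v 1) (v 2) < ∠ (u 0) (u 1) (u 2) ∧
    ∠ (v 2) (v 3) (v 0) < ∠ (u 2) (u 3) (u 0) ∧
    ∠ (v 1) (v 2) (v 3) < ∠ (u 1) (u 2) (u 3) := by
  obtain ⟨-, hvint⟩ := hv
  obtain ⟨-, huint⟩ := hu
  obtain ⟨⟨va, vb, vc, ve, vd⟩, ⟨vab1, vab2⟩, ⟨vce1, vce2⟩, vpi, varc1, varc2, vsum⟩ :=
    ReflexAux.reflex_facts (v 0) (v 1) (v 2) (v 3) hvint
  obtain ⟨⟨ua, ub, uc, ue, ud⟩, ⟨uab1, uab2⟩, ⟨uce1, uce2⟩, upi, uarc1, uarc2, usum⟩ :=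
    ReflexAux.reflex_facts (u 0) (u 1) (u 2) (u 3) huint
  have l0 := hlen 0 (by norm_num)
  have l1 := hlen 1 (by norm_num)
  have l2 := hlen 2 (by norm_num)
  have l3 := hlen 3 (by norm_num)
  norm_num at l0 l1 l2 l3
  have hA : dist (u 0) (u 1) = dist (v 0) (v 1) := by
    rw [dist_comm (u 0), dist_comm (v 0)]; exact l0.symm
  have hB : dist (u 1) (u 2) = dist (v 1) (v 2) := by
    rw [dist_comm (u 1), dist_comm (v 1)]; exact l1.symm
  have hC : dist (u 2) (u 3) = dist (v 2) (v 3) := by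
    rw [dist_comm (u 2), dist_comm (v 2)]; exact l2.symm
  have hE : dist (u 3) (u 0) = dist (v 3) (v 0) := by
    rw [dist_comm (u 3), dist_comm (v 3)]; exact l3.symm
  rw [hA, hB] at uab1 uab2 uarc1
  rw [hC, hE] at uce1 uce2 uarc2
  have hdd : dist (v 0) (v 2) < dist (u 0) (u 2) := by
    rw [dist_comm (v 0), dist_comm (u 0)]; exact hdiag
  -- claim 4 : the (exterior) angle at the reflex vertex
  have hgd' : Real.pi <
      Real.arccos ((dist (u 0) (u 2) ^ 2 + dist (v 1) (v 2) ^ 2 - dist (v 0) (v 1) ^ 2) /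
        (2 * dist (v 1) (v 2) * dist (u 0) (u 2)))
      + Real.arccos ((dist (u 0) (u 2) ^ 2 + dist (v 2) (v 3) ^ 2 - dist (v 3) (v 0) ^ 2) /
        (2 * dist (v 2) (v 3) * dist (u 0) (u 2))) := by
    rw [← uarc1, ← uarc2, usum]
    linarith [upi]
  have hkey := ReflexAux.gfun_lt (dist (v 0) (v 1)) (dist (v 1) (v 2)) (dist (v 2) (v 3))
      (dist (v 3) (v 0)) (dist (v 0) (v 2)) (dist (u 0) (u 2)) vb vc vd hdd vab1 uab2 vce1 uce2 hgd'
  rw [← uarc1, ← uarc2, ← varc1, ← varc2, usum, vsum] at hkey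
  have claim4 : ∠ (v 1) (v 2) (v 3) < ∠ (u 1) (u 2) (u 3) := by linarith
  -- commuted positivity facts
  have hv21 : 0 < dist (v 2) (v 1) := by rw [dist_comm]; exact vb
  have hv03 : 0 < dist (v 0) (v 3) := by rw [dist_comm]; exact ve
  have hv32 : 0 < dist (v 3) (v 2) := by rw [dist_comm]; exact vc
  have hv10 : 0 < dist (v 1) (v 0) := by rw [dist_comm]; exact va
  -- claim 2 : angle at vertex 1
  have hlv1 := EuclideanGeometry.law_cos (v 0) (v 1) (v 2)
  have hlu1 := EuclideanGeometry.law_cos (u 0) (u 1) (u 2)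
  have hB' : dist (u 2) (u 1) = dist (v 2) (v 1) := by
    rw [dist_comm (u 2), dist_comm (v 2)]; exact hB
  rw [hA, hB'] at hlu1
  have hsq : dist (v 0) (v 2) * dist (v 0) (v 2) < dist (u 0) (u 2) * dist (u 0) (u 2) :=
    mul_self_lt_mul_self vd.le hdd
  have hcos1 := ReflexAux.cos_lt_of_law va hv21 hlv1 hlu1 hsq
  have claim2 : ∠ (v 0) (v 1) (v 2) < ∠ (u 0) (u 1) (u 2) :=
    ReflexAux.angle_lt_of_cos_lt (EuclideanGeometry.angle_nonneg _ _ _)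
      (EuclideanGeometry.angle_le_pi _ _ _) (EuclideanGeometry.angle_nonneg _ _ _)
      (EuclideanGeometry.angle_le_pi _ _ _) hcos1
  -- claim 3 : angle at vertex 3
  have hlv3 := EuclideanGeometry.law_cos (v 2) (v 3) (v 0)
  have hlu3 := EuclideanGeometry.law_cos (u 2) (u 3) (u 0)
  have hE' : dist (u 0) (u 3) = dist (v 0) (v 3) := by
    rw [dist_comm (u 0), dist_comm (v 0)]; exact hE
  rw [hC, hE'] at hlu3
  have hsq3 : dist (v 2) (v 0) * dist (v 2) (v 0) < dist (u 2) (u 0) * dist (u 2) (u 0) :=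
    mul_self_lt_mul_self dist_nonneg hdiag
  have hcos3 := ReflexAux.cos_lt_of_law vc hv03 hlv3 hlu3 hsq3
  have claim3 : ∠ (v 2) (v 3) (v 0) < ∠ (u 2) (u 3) (u 0) :=
    ReflexAux.angle_lt_of_cos_lt (EuclideanGeometry.angle_nonneg _ _ _)
      (EuclideanGeometry.angle_le_pi _ _ _) (EuclideanGeometry.angle_nonneg _ _ _)
      (EuclideanGeometry.angle_le_pi _ _ _) hcos3
  -- claim 1 : angle at vertex 0, via the other diagonal
  have hlmv := EuclideanGeometry.law_cos (v 1) (v 2) (v 3)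
  have hlmu := EuclideanGeometry.law_cos (u 1) (u 2) (u 3)
  have hC' : dist (u 3) (u 2) = dist (v 3) (v 2) := by
    rw [dist_comm (u 3), dist_comm (v 3)]; exact hC
  rw [hB, hC'] at hlmu
  have hcosm : Real.cos (∠ (u 1) (u 2) (u 3)) < Real.cos (∠ (v 1) (v 2) (v 3)) :=
    Real.cos_lt_cos_of_nonneg_of_le_pi (EuclideanGeometry.angle_nonneg _ _ _)
      (EuclideanGeometry.angle_le_pi _ _ _) claim4
  have hmsq := ReflexAux.sq_lt_of_cos_lt vb hv32 hlmv hlmu hcosm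
  have hl0v := EuclideanGeometry.law_cos (v 3) (v 0) (v 1)
  have hl0u := EuclideanGeometry.law_cos (u 3) (u 0) (u 1)
  rw [hE, ← l0] at hl0u
  rw [dist_comm (v 3) (v 1)] at hl0v
  rw [dist_comm (u 3) (u 1)] at hl0u
  have hcos0 := ReflexAux.cos_lt_of_law ve hv10 hl0v hl0u hmsq
  have claim1 : ∠ (v 3) (v 0) (v 1) < ∠ (u 3) (u 0) (u 1) :=
    ReflexAux.angle_lt_of_cos_lt (EuclideanGeometry.angle_nonneg _ _ _)
      (EuclideanGeometry.angle_le_pi _ _ _) (EuclideanGeometry.angle_nonneg _ _ _)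
      (EuclideanGeometry.angle_le_pi _ _ _) hcos0
  exact ⟨claim1, claim2, claim3, claim4⟩
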